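/- Assume g(A N, ξ) = 0, set β := g(A ξ, ξ), let α ∈ ℝ, and let S : T → T be a g-symmetric real-linear map with Sξ = αξ on T := {Y ∈ V : g(Y,N) = 0}. Suppose that the Hopf identity 2g(SφS X, Y) - α·g(φS X + Sφ X, Y) - 2g(φ X, Y) + 2g(X, A N)g(Y, A ξ) - 2g(Y, A N)g(X, A ξ) - 2g(X, A N)·β·η(Y) + 2g(Y, A N)·β·η(X) = 0 holds for all X, Y ∈ T, where η(Y) := g(Y,ξ) and φ(X) := J X - g(J X,N)N, and suppose moreover that S(A ξ) = αβ·ξ. Then α·S(φ(A ξ)) = -2β²·φ(A ξ). -/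

import Mathlib

noncomputable section

variable {V : Type*}

/-- The real inner product `g(x,y) = Re⟨x,y⟩` induced by the Hermitian inner product. -/
def g [NormedAddCommGroup V] [InnerProductSpace ℂ V] (x y : V) : ℝ := (inner ℂ x y : ℂ).re

/-- The tangential part of `J X` on the hypersurface tangent space. -/
def phi [NormedAddCommGroup V] [InnerProductSpace ℂ V] (N X : V) : V :=
  Complex.I • X - g (Complex.I • X) N • N

section glemmas
variable [NormedAddCommGroup V] [InnerProductSpace ℂ V]

lemma g_comm (x y : V) : g x y = g y x := by
  unfold g; rw [← inner_conj_symm y x]; exact Complex.conj_re _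

lemma g_add_left (x y z : V) : g (x + y) z = g x z + g y z := by
  unfold g; rw [inner_add_left]; simp

lemma g_add_right (x y z : V) : g x (y + z) = g x y + g x z := by
  unfold g; rw [inner_add_right]; simp

lemma g_neg_left (x y : V) : g (-x) y = -g x y := by
  unfold g; rw [inner_neg_left]; simp

lemma g_neg_right (x y : V) : g x (-y) = -g x y := by
  unfold g; rw [inner_neg_right]; simp

lemma g_sub_left (x y z : V) : g (x - y) z = g x z - g y z := by
  rw [sub_eq_add_neg, g_add_left, g_neg_left]; ring

lemma g_sub_right (x y z : V) : g x (y - z) = g x y - g x z := by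
  rw [sub_eq_add_neg, g_add_right, g_neg_right]; ring

lemma g_smul_left (r : ℝ) (x y : V) : g (r • x) y = r * g x y := by
  unfold g
  rw [show r • x = (r : ℂ) • x by rw [Complex.coe_smul], inner_smul_left]
  simp

lemma g_smul_right (r : ℝ) (x y : V) : g x (r • y) = r * g x y := by
  rw [g_comm, g_smul_left, g_comm]

lemma g_zero_left (y : V) : g 0 y = 0 := by unfold g; simp

lemma g_I_left (x y : V) : g (Complex.I • x) y = (inner ℂ x y : ℂ).im := by
  unfold g; rw [inner_smul_left]; simp

lemma g_I_right (x y : V) : g x (Complex.I • y) = -(inner ℂ x y : ℂ).im := by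
  unfold g; rw [inner_smul_right]; simp

lemma g_self (x : V) : g x x = ‖x‖ ^ 2 := by
  unfold g
  have := inner_self_eq_norm_sq (𝕜 := ℂ) x
  simpa using this

lemma phi_smul (N : V) (r : ℝ) (x : V) : phi N (r • x) = r • phi N x := by
  unfold phi
  rw [smul_comm, g_smul_left, smul_sub, smul_smul]

lemma g_phi_N (N : V) (hN : ‖N‖ = 1) (x : V) : g (phi N x) N = 0 := by
  unfold phi
  rw [g_sub_left, g_smul_left, g_self, hN]
  ring

end glemmas

/-- If the Hopf identity (3.3) holds for the `g`-symmetric shape operator `S` with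
`Sξ = αξ`, `g(AN,ξ) = 0`, `β = g(Aξ,ξ)`, and moreover `S(Aξ) = αβ·ξ`, then
`α·S(φ(Aξ)) = -2β²·φ(Aξ)`. -/
theorem stmt_11 [NormedAddCommGroup V] [InnerProductSpace ℂ V]
    (A : V →ₗ[ℝ] V)
    (hA_invol : ∀ x, A (A x) = x)
    (hA_antiJ : ∀ x, A (Complex.I • x) = -(Complex.I • A x))
    (hA_herm : ∀ x y, (inner ℂ (A x) (A y) : ℂ) = inner ℂ y x)
    (N : V) (hN : ‖N‖ = 1)
    (ξ : V) (hξ : ξ = -(Complex.I • N))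
    (hANξ : g (A N) ξ = 0)
    (β : ℝ) (hβ : β = g (A ξ) ξ)
    (α : ℝ) (S : V →ₗ[ℝ] V)
    (hS_tan : ∀ Y : V, g Y N = 0 → g (S Y) N = 0)
    (hS_sym : ∀ X Y : V, g X N = 0 → g Y N = 0 → g (S X) Y = g X (S Y))
    (hSξ : S ξ = α • ξ)
    (hHopf : ∀ X Y : V, g X N = 0 → g Y N = 0 →
      2 * g (S (phi N (S X))) Y - α * (g (phi N (S X)) Y + g (S (phi N X)) Y)
        - 2 * g (phi N X) Y + 2 * g X (A N) * g Y (A ξ) - 2 * g Y (A N) * g X (A ξ)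
        - 2 * g X (A N) * β * g Y ξ + 2 * g Y (A N) * β * g X ξ = 0)
    (hSAξ : S (A ξ) = (α * β) • ξ) :
    α • S (phi N (A ξ)) = (-(2 * β ^ 2)) • phi N (A ξ) := by
  have hIIx : ∀ x : V, Complex.I • Complex.I • x = -x := by
    intro x
    rw [smul_smul, Complex.I_mul_I, neg_one_smul]
  -- g is invariant under A
  have hAA : ∀ x y : V, g (A x) (A y) = g x y := by
    intro x y
    unfold g
    rw [hA_herm]
    exact (g_comm y x)
  -- A ξ = I • A N
  have hAξ_eq : A ξ = Complex.I • A N := by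
    rw [hξ, map_neg, hA_antiJ, neg_neg]
  -- ⟪N,N⟫ is real
  have hNN : g N N = 1 := by rw [g_self, hN]; norm_num
  have hNNim : (inner ℂ N N : ℂ).im = 0 := by
    rw [inner_self_eq_norm_sq_to_K (𝕜 := ℂ)]
    simp [← Complex.ofReal_pow]
  have hξN : g ξ N = 0 := by
    rw [hξ, g_neg_left, g_I_left, hNNim, neg_zero]
  have hNξ : g N ξ = 0 := by rw [g_comm]; exact hξN
  have hξξ : g ξ ξ = 1 := by
    rw [hξ, g_neg_left, g_neg_right, neg_neg, g_self, norm_smul]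
    simp [hN]
  -- g (A ξ) N = g (A N) ξ = 0
  have hAξN : g (A ξ) N = 0 := by
    rw [hAξ_eq, g_I_left]
    have h2 : g (A N) ξ = (inner ℂ (A N) N : ℂ).im := by
      rw [hξ, g_neg_right, g_I_right, neg_neg]
    rw [← h2, hANξ]
  have hAξAN : g (A ξ) (A N) = 0 := by
    unfold g
    rw [hA_herm]
    have := hNξ
    unfold g at this
    exact this
  have hAξAξ : g (A ξ) (A ξ) = 1 := by rw [hAA, hξξ]
  have hAξξ : g (A ξ) ξ = β := hβ.symm
  -- phi N ξ = 0
  have hIξ : Complex.I • ξ = N := by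
    rw [hξ, smul_neg, hIIx, neg_neg]
  have hφξ : phi N ξ = 0 := by
    unfold phi
    rw [hIξ, hNN, one_smul, sub_self]
  -- phi N (A ξ) = -(A N) + g (A N) N • N
  have hφAξ : phi N (A ξ) = -(A N) + g (A N) N • N := by
    unfold phi
    rw [hAξ_eq, hIIx, g_neg_left, neg_smul, sub_neg_eq_add]
  have hφAξN : g (phi N (A ξ)) N = 0 := g_phi_N N hN (A ξ)
  -- for tangent Y : g Y (A N) = - g (phi N (A ξ)) Y
  have hYAN : ∀ Y : V, g Y N = 0 → g Y (A N) = -g (phi N (A ξ)) Y := by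
    intro Y hY
    rw [hφAξ, g_add_left, g_neg_left, g_smul_left, g_comm N Y, hY, g_comm]
    ring
  -- phi N (S (A ξ)) = 0
  have hφSAξ : phi N (S (A ξ)) = 0 := by
    rw [hSAξ, phi_smul, hφξ, smul_zero]
  -- the key pointwise identity
  set W : V := α • S (phi N (A ξ)) + (2 * β ^ 2) • phi N (A ξ) with hW
  have hkey : ∀ Y : V, g Y N = 0 → g W Y = 0 := by
    intro Y hY
    have h := hHopf (A ξ) Y hAξN hY
    rw [hφSAξ, map_zero, g_zero_left, hAξAN, hAξAξ, hAξξ,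
      hYAN Y hY] at h
    rw [hW, g_add_left, g_smul_left, g_smul_left]
    nlinarith [h]
  have hWN : g W N = 0 := by
    rw [hW, g_add_left, g_smul_left, g_smul_left, hφAξN,
      hS_tan _ hφAξN]
    ring
  have hWW : g W W = 0 := hkey W hWN
  have hW0 : W = 0 := by
    rw [g_self] at hWW
    have := pow_eq_zero_iff (n := 2) (by norm_num) |>.mp hWW
    exact norm_eq_zero.mp this
  rw [hW] at hW0
  have h2 := eq_neg_of_add_eq_zero_left hW0
  rw [h2, ← neg_smul]
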